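/- Every integer expressible as p³ + q³ for some integers p, q can be expressed, for infinitely many 4-tuples of integers (x₁, x₂, x₃, x₄), as x₁³ + x₂³ + x₃³ + x₄³. More precisely: for any integers p, q, the set of 4-tuples (x₁,x₂,x₃,x₄) ∈ ℤ⁴ with x₁³ + x₂³ + x₃³ + x₄³ = p³ + q³ is infinite, provided p + q ≠ 0. -/
import Mathlib


theorem stmt2 (p q : ℤ) (h : p + q ≠ 0) :
    {x : ℤ × ℤ × ℤ × ℤ |
      x.1^3 + x.2.1^3 + x.2.2.1^3 + x.2.2.2^3 = p^3 + q^3}.Infinite := by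
  apply Set.infinite_of_injective_forall_mem
    (f := fun t : ℤ =>
      (2*(p+q)*t^2 + 4*q*t + q,
       2*(p+q)*t^2 + 4*q*t - p + 2*q,
       -(2*(p+q)*t^2) + (p-3*q)*t + p,
       -(2*(p+q)*t^2) - (p+5*q)*t + p - 2*q))
  · intro a b hab
    simp only [Prod.mk.injEq] at hab
    obtain ⟨h1, _, h3, _⟩ := hab
    have key : (a - b) * (p + q) = 0 := by linear_combination h1 + h3
    rcases mul_eq_zero.mp key with hk | hk
    · linarith [sub_eq_zero.mp hk]
    · exact absurd hk h
  · intro t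
    simp only [Set.mem_setOf_eq]
    ring
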